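/- Let G be a finite group and let T denote the free Tambara functor monad on Mack(G), i.e., the monad induced by the adjunction between the free Tambara functor functor T : Mack(G) → Tamb(G) and the forgetful functor Tamb(G) → Mack(G). Then the Eilenberg–Moore comparison functor Tamb(G) → Mack(G)[T] is an isomorphism of categories; that is, the forgetful functor Tamb(G) → Mack(G) is monadic and Tamb(G) is isomorphic to the category of algebras over the monad T. Moreover, given a T-algebra (R, m : T(R) → R), the norm maps of the corresponding Tambara functor structure on R are n_f := m(Y) ∘ n_f^{T(R)} ∘ θ_R(X) for G-maps f : X → Y, where θ_R : R → T(R) is the unit of the monad. -/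

import Mathlib

set_option autoImplicit false

namespace Tamb

variable {G : Type} [Group G]

/-- A function between `G`-sets is equivariant. -/
def IsEquivariant (G : Type) [Group G] {A B : Type} [SMul G A] [SMul G B] (f : A → B) : Prop :=
  ∀ (g : G) (a : A), f (g • a) = g • f a

section Maps

variable {X Y Z : Type} [MulAction G X] [MulAction G Y] [MulAction G Z]

/-- The identity equivariant map. -/
def gid (G X : Type) [Group G] [MulAction G X] : X →[G] X :=
  ⟨fun x => x, fun _ _ => rfl⟩

@[simp] theorem gid_apply (x : X) : gid G X x = x := rfl

/-- Composition of equivariant maps. -/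
def gcomp (j : Y →[G] Z) (i : X →[G] Y) : X →[G] Z :=
  ⟨fun x => j (i x), fun g x => by
    show j (i (g • x)) = g • j (i x)
    rw [MulActionHom.map_smul, MulActionHom.map_smul]⟩

@[simp] theorem gcomp_apply (j : Y →[G] Z) (i : X →[G] Y) (x : X) : gcomp j i x = j (i x) := rfl

/-- The pullback of two equivariant maps of `G`-sets. -/
def Pb (f : X →[G] Z) (g : Y →[G] Z) : Type := {p : X × Y // f p.1 = g p.2}

namespace Pb

variable (f : X →[G] Z) (g : Y →[G] Z)

instance : SMul G (Pb f g) :=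
  ⟨fun a p => ⟨(a • p.1.1, a • p.1.2), by
    rw [MulActionHom.map_smul, MulActionHom.map_smul, p.2]⟩⟩

instance : MulAction G (Pb f g) where
  one_smul p := Subtype.ext (Prod.ext (one_smul _ _) (one_smul _ _))
  mul_smul a b p := Subtype.ext (Prod.ext (mul_smul _ _ _) (mul_smul _ _ _))

instance [Finite X] [Finite Y] : Finite (Pb f g) := Subtype.finite

/-- First projection of a pullback. -/
def fstHom : Pb f g →[G] X := ⟨fun p => p.1.1, fun _ _ => rfl⟩
/-- Second projection of a pullback. -/
def sndHom : Pb f g →[G] Y := ⟨fun p => p.1.2, fun _ _ => rfl⟩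

@[simp] theorem fstHom_apply (p : Pb f g) : fstHom f g p = p.1.1 := rfl
@[simp] theorem sndHom_apply (p : Pb f g) : sndHom f g p = p.1.2 := rfl

end Pb

/-- `Sec i j` is the set `∏_{i,j} X` of sections of `i : X → Y` defined on fibers
of `j : Y → Z`: an element is a point `z : Z` together with a section of `i`
defined on `j⁻¹(z)`. -/
structure Sec (i : X →[G] Y) (j : Y →[G] Z) where
  pt : Z
  sec : ∀ y : Y, j y = pt → X
  isSec : ∀ (y : Y) (h : j y = pt), i (sec y h) = y

namespace Sec

variable {i : X →[G] Y} {j : Y →[G] Z}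

theorem ext' {σ τ : Sec i j} (h1 : σ.pt = τ.pt)
    (h2 : ∀ (y : Y) (h : j y = σ.pt) (h' : j y = τ.pt), σ.sec y h = τ.sec y h') : σ = τ := by
  obtain ⟨p, s, hs⟩ := σ
  obtain ⟨p', s', hs'⟩ := τ
  dsimp at h1
  subst h1
  have hss : s = s' := by
    funext y hy
    exact h2 y hy hy
  subst hss
  rfl

theorem sec_congr (σ : Sec i j) {y y' : Y} (e : y = y') {h : j y = σ.pt} {h' : j y' = σ.pt} :
    σ.sec y h = σ.sec y' h' := by subst e; rfl

instance : SMul G (Sec i j) :=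
  ⟨fun a σ =>
    { pt := a • σ.pt
      sec := fun y h => a • σ.sec (a⁻¹ • y) (by rw [MulActionHom.map_smul, h, inv_smul_smul])
      isSec := fun y h => by
        rw [MulActionHom.map_smul, σ.isSec, smul_inv_smul] }⟩

@[simp] theorem smul_pt (a : G) (σ : Sec i j) : (a • σ).pt = a • σ.pt := rfl

theorem smul_sec (a : G) (σ : Sec i j) (y : Y) (h : j y = (a • σ).pt)
    (h' : j (a⁻¹ • y) = σ.pt) : (a • σ).sec y h = a • σ.sec (a⁻¹ • y) h' := rfl

instance : MulAction G (Sec i j) where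
  one_smul σ := by
    refine ext' (one_smul _ _) (fun y h h' => ?_)
    have h'' : j ((1 : G)⁻¹ • y) = σ.pt := by rw [inv_one, one_smul]; exact h'
    rw [smul_sec 1 σ y h h'', one_smul]
    exact sec_congr σ (by rw [inv_one, one_smul])
  mul_smul a b σ := by
    refine ext' (mul_smul _ _ _) (fun y h h' => ?_)
    have h1 : j ((a * b)⁻¹ • y) = σ.pt := by
      rw [MulActionHom.map_smul, h]
      exact inv_smul_smul _ _
    have h2 : j (a⁻¹ • y) = (b • σ).pt := by
      rw [MulActionHom.map_smul, h']
      show a⁻¹ • (a • (b • σ).pt) = _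
      exact inv_smul_smul _ _
    have h3 : j (b⁻¹ • (a⁻¹ • y)) = σ.pt := by
      rw [MulActionHom.map_smul, h2]
      exact inv_smul_smul _ _
    rw [smul_sec (a * b) σ y h h1, smul_sec a (b • σ) y h' h2, smul_sec b σ (a⁻¹ • y) h2 h3,
      mul_smul]
    exact congrArg (a • ·) (congrArg (b • ·) (sec_congr σ (by rw [mul_inv_rev, mul_smul])))

instance optionFinite {X : Type} [Finite X] : Finite (Option X) :=
  Finite.of_equiv (X ⊕ PUnit.{1}) (Equiv.optionEquivSumPUnit.{0,0} X).symm

instance [Finite X] [Finite Y] [Finite Z] : Finite (Sec i j) := by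
  classical
  have hF : Function.Injective (fun σ : Sec i j =>
      ((σ.pt, fun y => if h : j y = σ.pt then some (σ.sec y h) else none) :
        Z × (Y → Option X))) := by
    intro σ τ he
    have h1 : σ.pt = τ.pt := congrArg Prod.fst he
    refine ext' h1 (fun y hy hy' => ?_)
    have h2 := congrFun (congrArg Prod.snd he) y
    dsimp only at h2
    rw [dif_pos hy, dif_pos hy'] at h2
    exact Option.some_injective _ h2
  exact Finite.of_injective _ hF

end Sec

/-- The canonical projection `∏_{i,j} X → Z`. -/
def pHom (i : X →[G] Y) (j : Y →[G] Z) : Sec i j →[G] Z :=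
  ⟨fun σ => σ.pt, fun _ _ => rfl⟩

@[simp] theorem pHom_apply (i : X →[G] Y) (j : Y →[G] Z) (σ : Sec i j) :
    pHom i j σ = σ.pt := rfl

/-- The canonical pullback `Y ×_Z ∏_{i,j} X`. -/
abbrev ECan (i : X →[G] Y) (j : Y →[G] Z) : Type := Pb j (pHom i j)

/-- The evaluation map `e : Y ×_Z ∏_{i,j} X → X`. -/
def eval (i : X →[G] Y) (j : Y →[G] Z) : ECan i j → X := fun q => q.1.2.sec q.1.1 q.2

theorem eval_smul (i : X →[G] Y) (j : Y →[G] Z) (a : G) (q : ECan i j) :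
    eval i j (a • q) = a • eval i j q := by
  have h1 : j (a • q.1.1) = (a • q.1.2).pt := by
    rw [MulActionHom.map_smul, q.2]; rfl
  have h2 : j (a⁻¹ • (a • q.1.1)) = q.1.2.pt := by rw [inv_smul_smul]; exact q.2
  calc eval i j (a • q) = (a • q.1.2).sec (a • q.1.1) h1 := rfl
    _ = a • q.1.2.sec (a⁻¹ • (a • q.1.1)) h2 := Sec.smul_sec _ _ _ _ _
    _ = a • q.1.2.sec q.1.1 q.2 := congrArg (a • ·) (Sec.sec_congr _ (inv_smul_smul a q.1.1))

/-- The evaluation map as an equivariant map. -/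
def evalHom (i : X →[G] Y) (j : Y →[G] Z) : ECan i j →[G] X :=
  ⟨eval i j, eval_smul i j⟩

/-- The projection `π₂ : Y ×_Z ∏_{i,j} X → ∏_{i,j} X` of the canonical exponential diagram. -/
def pi2Hom (i : X →[G] Y) (j : Y →[G] Z) : ECan i j →[G] Sec i j :=
  Pb.sndHom j (pHom i j)

end Maps

/-- `(f, g, h)` is a distributor for `(i, j)`: the diagram with bottom row
`X →i Y →j Z`, top row `g : A → B`, left vertical `f : A → X` and right vertical
`h : B → Z` is an exponential diagram, i.e. it is isomorphic (by equivariant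
bijections fixing the bottom row) to the canonical diagram built from `∏_{i,j} X`. -/
def IsDistributor {X Y Z A B : Type} [MulAction G X] [MulAction G Y] [MulAction G Z]
    [MulAction G A] [MulAction G B]
    (i : X →[G] Y) (j : Y →[G] Z) (f : A →[G] X) (g : A →[G] B) (h : B →[G] Z) : Prop :=
  ∃ (α : A ≃ ECan i j) (β : B ≃ Sec i j),
    IsEquivariant G ⇑α ∧ IsEquivariant G ⇑β ∧
    (∀ a, eval i j (α a) = f a) ∧
    (∀ a, β (g a) = (α a).1.2) ∧
    (∀ b, (β b).pt = h b)
section CoreB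

/-- A (bundled) finite `G`-set. -/
structure FinGSet (G : Type) [Group G] : Type 1 where
  carrier : Type
  [fin : Finite carrier]
  [act : MulAction G carrier]

attribute [instance] FinGSet.fin FinGSet.act

instance : MulAction G Empty where
  smul _ e := e.elim
  one_smul e := e.elim
  mul_smul _ _ e := e.elim

/-- Bundle a finite `G`-set. -/
def mkG (G : Type) [Group G] (A : Type) [MulAction G A] [Finite A] : FinGSet G := ⟨A⟩

/-- The empty `G`-set. -/
def emptyG (G : Type) [Group G] : FinGSet G := ⟨Empty⟩
/-- The one-point `G`-set (`G/G`). -/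
def ptG (G : Type) [Group G] : FinGSet G := ⟨PUnit⟩
/-- Binary coproduct of finite `G`-sets. -/
def sumG (X Y : FinGSet G) : FinGSet G := ⟨X.carrier ⊕ Y.carrier⟩
/-- Binary product of finite `G`-sets. -/
def prodG (X Y : FinGSet G) : FinGSet G := ⟨X.carrier × Y.carrier⟩

def initHom (X : FinGSet G) : (emptyG G).carrier →[G] X.carrier :=
  ⟨fun e => e.elim, fun _ e => e.elim⟩
def toPtHom (X : FinGSet G) : X.carrier →[G] (ptG G).carrier :=
  ⟨fun _ => PUnit.unit, fun _ _ => rfl⟩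
def inlHom (X Y : FinGSet G) : X.carrier →[G] (sumG X Y).carrier :=
  ⟨Sum.inl, fun _ _ => rfl⟩
def inrHom (X Y : FinGSet G) : Y.carrier →[G] (sumG X Y).carrier :=
  ⟨Sum.inr, fun _ _ => rfl⟩
def sumMapHom {X Y X' Y' : FinGSet G} (f : X.carrier →[G] X'.carrier)
    (g : Y.carrier →[G] Y'.carrier) : (sumG X Y).carrier →[G] (sumG X' Y').carrier :=
  ⟨Sum.map f g, fun a x => by
    cases x with
    | inl v => show Sum.inl (f (a • v)) = Sum.inl (a • f v); rw [MulActionHom.map_smul]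
    | inr v => show Sum.inr (g (a • v)) = Sum.inr (a • g v); rw [MulActionHom.map_smul]⟩
def sumElimHom {X Y Z : FinGSet G} (f : X.carrier →[G] Z.carrier)
    (g : Y.carrier →[G] Z.carrier) : (sumG X Y).carrier →[G] Z.carrier :=
  ⟨Sum.elim f g, fun a x => by
    cases x with
    | inl v => show f (a • v) = a • f v; rw [MulActionHom.map_smul]
    | inr v => show g (a • v) = a • g v; rw [MulActionHom.map_smul]⟩
/-- The fold map `X ⊔ X → X`. -/
def foldHom (X : FinGSet G) : (sumG X X).carrier →[G] X.carrier :=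
  sumElimHom (gid G X.carrier) (gid G X.carrier)
def prodMapHom {X Y X' Y' : FinGSet G} (f : X.carrier →[G] X'.carrier)
    (g : Y.carrier →[G] Y'.carrier) : (prodG X Y).carrier →[G] (prodG X' Y').carrier :=
  ⟨Prod.map f g, fun a x => Prod.ext (MulActionHom.map_smul f a x.1) (MulActionHom.map_smul g a x.2)⟩
def pi1Hom (X Y : FinGSet G) : (prodG X Y).carrier →[G] X.carrier :=
  ⟨Prod.fst, fun _ _ => rfl⟩
def pi2ProdHom (X Y : FinGSet G) : (prodG X Y).carrier →[G] Y.carrier :=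
  ⟨Prod.snd, fun _ _ => rfl⟩

/-- A semi-Mackey functor over `G` (with set values): restrictions and transfers,
functorial, converting coproducts into products, and satisfying the pullback
(Mackey double coset) condition. -/
structure SemiMackey (G : Type) [Group G] : Type 2 where
  obj : FinGSet G → Type 1
  nonempty : ∀ X, Nonempty (obj X)
  res : ∀ {X Y : FinGSet G}, (X.carrier →[G] Y.carrier) → obj Y → obj X
  tr : ∀ {X Y : FinGSet G}, (X.carrier →[G] Y.carrier) → obj X → obj Y
  res_id : ∀ {X : FinGSet G} (x : obj X), res (gid G X.carrier) x = x
  res_comp : ∀ {X Y Z : FinGSet G} (i : X.carrier →[G] Y.carrier)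
    (j : Y.carrier →[G] Z.carrier) (z : obj Z), res i (res j z) = res (gcomp j i) z
  tr_id : ∀ {X : FinGSet G} (x : obj X), tr (gid G X.carrier) x = x
  tr_comp : ∀ {X Y Z : FinGSet G} (i : X.carrier →[G] Y.carrier)
    (j : Y.carrier →[G] Z.carrier) (x : obj X), tr j (tr i x) = tr (gcomp j i) x
  mackey : ∀ {X Y Z : FinGSet G} (j : X.carrier →[G] Z.carrier)
    (i : Y.carrier →[G] Z.carrier) (y : obj Y),
    res j (tr i y) =
      tr (X := mkG G (Pb j i)) (Pb.fstHom j i) (res (X := mkG G (Pb j i)) (Pb.sndHom j i) y)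
  sum_bij : ∀ (X Y : FinGSet G),
    Function.Bijective (fun z : obj (sumG X Y) => (res (inlHom X Y) z, res (inrHom X Y) z))
  empty_subsingleton : Subsingleton (obj (emptyG G))

/-- A semi-Tambara functor over `G`: a semi-Mackey functor with multiplicative
norms, commuting with restrictions over pullbacks and satisfying the
distributive law over exponential diagrams. -/
structure SemiTambara (G : Type) [Group G] extends SemiMackey G : Type 2 where
  nm : ∀ {X Y : FinGSet G}, (X.carrier →[G] Y.carrier) → obj X → obj Y
  nm_id : ∀ {X : FinGSet G} (x : obj X), nm (gid G X.carrier) x = x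
  nm_comp : ∀ {X Y Z : FinGSet G} (i : X.carrier →[G] Y.carrier)
    (j : Y.carrier →[G] Z.carrier) (x : obj X), nm j (nm i x) = nm (gcomp j i) x
  nm_res : ∀ {X Y Z : FinGSet G} (j : X.carrier →[G] Z.carrier)
    (i : Y.carrier →[G] Z.carrier) (y : obj Y),
    res j (nm i y) =
      nm (X := mkG G (Pb j i)) (Pb.fstHom j i) (res (X := mkG G (Pb j i)) (Pb.sndHom j i) y)
  distrib : ∀ {X Y Z A B : FinGSet G} (i : X.carrier →[G] Y.carrier)
    (j : Y.carrier →[G] Z.carrier) (f : A.carrier →[G] X.carrier)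
    (g : A.carrier →[G] B.carrier) (h : B.carrier →[G] Z.carrier),
    IsDistributor i j f g h → ∀ x : obj X, nm j (tr i x) = tr h (nm g (res f x))

/-- The element of `M(X ⊔ Y)` corresponding to a pair `(x, y)`. -/
noncomputable def SemiMackey.pairElt (M : SemiMackey G) {X Y : FinGSet G}
    (x : M.obj X) (y : M.obj Y) : M.obj (sumG X Y) :=
  (Equiv.ofBijective _ (M.sum_bij X Y)).symm (x, y)

/-- The addition on `M(X)` induced by transfer along the fold map. -/
noncomputable def SemiMackey.add (M : SemiMackey G) {X : FinGSet G} (x y : M.obj X) : M.obj X :=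
  M.tr (foldHom X) (M.pairElt x y)

/-- The zero of `M(X)`: the transfer of the unique element of `M(∅)`. -/
noncomputable def SemiMackey.zero (M : SemiMackey G) (X : FinGSet G) : M.obj X :=
  M.tr (initHom X) (M.nonempty (emptyG G)).some

/-- The multiplication on `R(X)` induced by the norm along the fold map. -/
noncomputable def SemiTambara.mul (R : SemiTambara G) {X : FinGSet G} (x y : R.obj X) :
    R.obj X :=
  R.nm (foldHom X) (R.toSemiMackey.pairElt x y)

/-- The multiplicative unit of `R(X)`: the norm of the unique element of `R(∅)`. -/
noncomputable def SemiTambara.one (R : SemiTambara G) (X : FinGSet G) : R.obj X :=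
  R.nm (initHom X) (R.nonempty (emptyG G)).some

/-- A Mackey functor: a semi-Mackey functor all of whose values are abelian
groups under the transfer-induced addition. -/
structure Mackey (G : Type) [Group G] extends SemiMackey G : Type 2 where
  hasNeg : ∀ (X : FinGSet G) (x : obj X), ∃ y, toSemiMackey.add x y = toSemiMackey.zero X

/-- A Tambara functor: a semi-Tambara functor all of whose values are abelian
groups under the transfer-induced addition. -/
structure Tambara (G : Type) [Group G] extends SemiTambara G : Type 2 where
  hasNeg : ∀ (X : FinGSet G) (x : obj X),
    ∃ y, toSemiMackey.add x y = toSemiMackey.zero X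

/-- A map of semi-Mackey functors. -/
structure SMackHom {G : Type} [Group G] (M N : SemiMackey G) : Type 1 where
  app : ∀ X, M.obj X → N.obj X
  app_res : ∀ {X Y : FinGSet G} (f : X.carrier →[G] Y.carrier) (y : M.obj Y),
    app X (M.res f y) = N.res f (app Y y)
  app_tr : ∀ {X Y : FinGSet G} (f : X.carrier →[G] Y.carrier) (x : M.obj X),
    app Y (M.tr f x) = N.tr f (app X x)

/-- A map of semi-Tambara functors. -/
structure STambHom {G : Type} [Group G] (M N : SemiTambara G) extends
    SMackHom M.toSemiMackey N.toSemiMackey : Type 1 where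
  app_nm : ∀ {X Y : FinGSet G} (f : X.carrier →[G] Y.carrier) (x : M.obj X),
    app Y (M.nm f x) = N.nm f (app X x)

/-- A formal "transfer of a norm of an element of `M`": a pair
`(U →i V →j X, u ∈ M(U))`. -/
structure PreT {G : Type} [Group G] (M : SemiMackey G) (X : FinGSet G) : Type 1 where
  U : FinGSet G
  V : FinGSet G
  i : U.carrier →[G] V.carrier
  j : V.carrier →[G] X.carrier
  u : M.obj U

/-- Two pairs are isomorphic. -/
def IsoRel (M : SemiMackey G) (X : FinGSet G) (a b : PreT M X) : Prop :=
  ∃ (f : b.U.carrier ≃ a.U.carrier) (g : b.V.carrier ≃ a.V.carrier)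
    (hf : IsEquivariant G ⇑f) (_ : IsEquivariant G ⇑g),
    (∀ u' : b.U.carrier, a.i (f u') = g (b.i u')) ∧
    (∀ v' : b.V.carrier, a.j (g v') = b.j v') ∧
    M.res (MulActionHom.mk ⇑f hf) a.u = b.u

/-- The relation defining the free semi-Tambara functor `sT(M)`: pairs are
identified up to isomorphism and the distributive-law relation. -/
inductive STRel (M : SemiMackey G) (X : FinGSet G) : PreT M X → PreT M X → Prop
  | iso {a b : PreT M X} : IsoRel M X a b → STRel M X a b
  | distrib {W U V A B : FinGSet G} (k : W.carrier →[G] U.carrier)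
      (i : U.carrier →[G] V.carrier) (j : V.carrier →[G] X.carrier)
      (f : A.carrier →[G] W.carrier) (g : A.carrier →[G] B.carrier)
      (h : B.carrier →[G] V.carrier) :
      IsDistributor k i f g h → ∀ w : M.obj W,
      STRel M X ⟨U, V, i, j, M.tr k w⟩ ⟨A, B, g, gcomp j h, M.res f w⟩

/-- The value of the free semi-Tambara functor on `M` at `X`. -/
def sT (M : SemiMackey G) (X : FinGSet G) : Type 1 := Quot (STRel M X)

/-- The universal map `θ_M : M → sT(M)`, at the level of representatives. -/
def thetaPre (M : SemiMackey G) (X : FinGSet G) (x : M.obj X) : PreT M X :=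
  ⟨X, X, gid G X.carrier, gid G X.carrier, x⟩

/-- Transfer on representatives: postcomposition. -/
def trPre (M : SemiMackey G) {X Y : FinGSet G} (f : X.carrier →[G] Y.carrier)
    (a : PreT M X) : PreT M Y :=
  ⟨a.U, a.V, a.i, gcomp f a.j, a.u⟩

/-- Restriction on representatives: pull back both maps. -/
def resPre (M : SemiMackey G) {X Y : FinGSet G} (f : Y.carrier →[G] X.carrier)
    (a : PreT M X) : PreT M Y where
  U := mkG G (Pb a.i (Pb.fstHom a.j f))
  V := mkG G (Pb a.j f)
  i := Pb.sndHom a.i (Pb.fstHom a.j f)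
  j := Pb.sndHom a.j f
  u := M.res (X := mkG G (Pb a.i (Pb.fstHom a.j f))) (Pb.fstHom a.i (Pb.fstHom a.j f)) a.u

/-- Norm on representatives, via the canonical exponential diagram for `(j, f)`. -/
def normPre (M : SemiMackey G) {X Y : FinGSet G} (f : X.carrier →[G] Y.carrier)
    (a : PreT M X) : PreT M Y where
  U := mkG G (Pb a.i (evalHom a.j f))
  V := mkG G (Sec a.j f)
  i := gcomp (pi2Hom a.j f) (Pb.sndHom a.i (evalHom a.j f))
  j := pHom a.j f
  u := M.res (X := mkG G (Pb a.i (evalHom a.j f))) (Pb.fstHom a.i (evalHom a.j f)) a.u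

/-- Addition on representatives: disjoint union. -/
noncomputable def addPre (M : SemiMackey G) {X : FinGSet G} (a b : PreT M X) : PreT M X where
  U := sumG a.U b.U
  V := sumG a.V b.V
  i := sumMapHom a.i b.i
  j := sumElimHom a.j b.j
  u := M.pairElt a.u b.u

/-- A pair has (pure) degree `n` if every fiber of its first map has exactly `n`
elements. -/
def DegN {M : SemiMackey G} {X : FinGSet G} (n : ℕ) (a : PreT M X) : Prop :=
  ∀ v : a.V.carrier, Nat.card {u : a.U.carrier // a.i u = v} = n

/-- A finite `G`-set over `X` (a representative for the Burnside semi-Mackey functor). -/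
structure BurnPre (G : Type) [Group G] (X : FinGSet G) : Type 1 where
  A : FinGSet G
  f : A.carrier →[G] X.carrier

/-- Isomorphism of finite `G`-sets over `X`. -/
def BurnIso {X : FinGSet G} (s t : BurnPre G X) : Prop :=
  ∃ (e : s.A.carrier ≃ t.A.carrier) (_ : IsEquivariant G ⇑e), ∀ x, t.f (e x) = s.f x

/-- The pair `(∅ → A →f X, 0)` associated to a `G`-set over `X`. -/
noncomputable def bPair (M : SemiMackey G) {X : FinGSet G} (s : BurnPre G X) : PreT M X :=
  ⟨emptyG G, s.A, initHom s.A, s.f, (M.nonempty (emptyG G)).some⟩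

end CoreB

section CoreCat

open CategoryTheory

variable {G : Type} [Group G]

/-- The identity map of semi-Mackey functors. -/
def SMackHom.idH (M : SemiMackey G) : SMackHom M M where
  app _ x := x
  app_res _ _ := rfl
  app_tr _ _ := rfl

/-- Composition of maps of semi-Mackey functors. -/
def SMackHom.compH {M N P : SemiMackey G} (f : SMackHom M N) (g : SMackHom N P) :
    SMackHom M P where
  app X x := g.app X (f.app X x)
  app_res h y := by
    show g.app _ (f.app _ (M.res h y)) = P.res h (g.app _ (f.app _ y))
    rw [f.app_res, g.app_res]
  app_tr h x := by
    show g.app _ (f.app _ (M.tr h x)) = P.tr h (g.app _ (f.app _ x))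
    rw [f.app_tr, g.app_tr]

theorem SMackHom.extH {M N : SemiMackey G} {f g : SMackHom M N} (h : f.app = g.app) :
    f = g := by
  cases f; cases g; cases h; rfl

/-- The identity map of semi-Tambara functors. -/
def STambHom.idH (M : SemiTambara G) : STambHom M M :=
  ⟨SMackHom.idH M.toSemiMackey, fun _ _ => rfl⟩

/-- Composition of maps of semi-Tambara functors. -/
def STambHom.compH {M N P : SemiTambara G} (f : STambHom M N) (g : STambHom N P) :
    STambHom M P :=
  ⟨SMackHom.compH f.toSMackHom g.toSMackHom, fun h x => by
    show g.app _ (f.app _ (M.nm h x)) = P.nm h (g.app _ (f.app _ x))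
    rw [f.app_nm, g.app_nm]⟩

theorem STambHom.extH {M N : SemiTambara G} {f g : STambHom M N} (h : f.app = g.app) :
    f = g := by
  obtain ⟨⟨fa, fr, ft⟩, fn⟩ := f
  obtain ⟨⟨ga, gr, gt⟩, gn⟩ := g
  cases h
  rfl

/-- The category `Mack(G)` of Mackey functors over `G`. -/
instance : Category (Mackey G) where
  Hom M N := SMackHom M.toSemiMackey N.toSemiMackey
  id M := SMackHom.idH M.toSemiMackey
  comp f g := SMackHom.compH f g
  id_comp _ := SMackHom.extH rfl
  comp_id _ := SMackHom.extH rfl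
  assoc _ _ _ := SMackHom.extH rfl

/-- The category `Tamb(G)` of Tambara functors over `G`. -/
instance : Category (Tambara G) where
  Hom M N := STambHom M.toSemiTambara N.toSemiTambara
  id M := STambHom.idH M.toSemiTambara
  comp f g := STambHom.compH f g
  id_comp _ := STambHom.extH rfl
  comp_id _ := STambHom.extH rfl
  assoc _ _ _ := STambHom.extH rfl

/-- The forgetful functor `Tamb(G) → Mack(G)` (neglect of norms). -/
def forgetTM (G : Type) [Group G] : Tambara G ⥤ Mackey G where
  obj T := ⟨T.toSemiMackey, T.hasNeg⟩
  map f := f.toSMackHom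
  map_id _ := rfl
  map_comp _ _ := rfl

end CoreCat


section Part1

variable {G : Type} [Group G]

theorem ghom_ext {X Y : Type} [MulAction G X] [MulAction G Y] {f g : X →[G] Y}
    (h : ∀ x, f x = g x) : f = g := MulActionHom.ext h

theorem smul_heq {T1 T2 : Type} (h : T1 = T2) (i1 : SMul G T1) (i2 : SMul G T2)
    (hw : ∀ (a : G) (x : T1) (y : T2), HEq x y → HEq (i1.smul a x) (i2.smul a y)) :
    HEq i1 i2 := by
  subst h
  have : i1 = i2 := by
    cases i1; cases i2
    congr 1
    funext a x
    exact eq_of_heq (hw a x x HEq.rfl)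
  exact heq_of_eq this

theorem mulAction_heq {T1 T2 : Type} (h : T1 = T2) (a1 : MulAction G T1) (a2 : MulAction G T2)
    (hs : HEq a1.toSMul a2.toSMul) : HEq a1 a2 := by
  subst h
  have h2 : a1.toSMul = a2.toSMul := eq_of_heq hs
  cases a1; cases a2
  rename_i sa1 _ sa2 _
  cases sa1; cases sa2
  cases h2
  rfl

theorem finGSet_eq {c c' : Type} (h : c = c') (f1 : Finite c) (f2 : Finite c')
    (a1 : MulAction G c) (a2 : MulAction G c') (ha : HEq a1 a2) :
    (@FinGSet.mk G _ c f1 a1) = (@FinGSet.mk G _ c' f2 a2) := by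
  subst h
  have h2 : a1 = a2 := eq_of_heq ha
  cases h2
  rfl

theorem hom_heq {c c' Z : Type} (h : c = c') (s1 : SMul G c) (s2 : SMul G c') (sZ : SMul G Z)
    (hs : HEq s1 s2)
    (f : @MulActionHom G G (@id G) c s1 Z sZ) (f' : @MulActionHom G G (@id G) c' s2 Z sZ)
    (hf : ∀ (x : c) (x' : c'), HEq x x' → f x = f' x') : HEq f f' := by
  subst h
  have h2 : s1 = s2 := eq_of_heq hs
  cases h2
  exact heq_of_eq (MulActionHom.ext fun x => hf x x HEq.rfl)

theorem subtype_heq {α : Type} {P Q : α → Prop} (h : P = Q) {u : Subtype P} {v : Subtype Q}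
    (hv : u.1 = v.1) : HEq u v := by subst h; exact heq_of_eq (Subtype.ext hv)

theorem subtype_val_eq {α : Type} {P Q : α → Prop} (h : P = Q) {u : Subtype P} {v : Subtype Q}
    (hv : HEq u v) : u.1 = v.1 := by subst h; rw [eq_of_heq hv]

theorem pb_transport {X Y Z Z' : Type} [MulAction G X] [MulAction G Y] [Finite X] [Finite Y]
    [MulAction G Z] [MulAction G Z']
    (j : X →[G] Z) (i : Y →[G] Z) (j' : X →[G] Z') (i' : Y →[G] Z')
    (hpred : ∀ x y, j x = i y ↔ j' x = i' y) :
    mkG G (Pb j i) = mkG G (Pb j' i') ∧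
      HEq (Pb.fstHom j i) (Pb.fstHom j' i') ∧ HEq (Pb.sndHom j i) (Pb.sndHom j' i') := by
  have hPQ : (fun p : X × Y => j p.1 = i p.2) = (fun p : X × Y => j' p.1 = i' p.2) :=
    funext fun p => propext (hpred p.1 p.2)
  have hty : Pb j i = Pb j' i' := congrArg Subtype hPQ
  have hsmul : HEq (inferInstance : SMul G (Pb j i)) (inferInstance : SMul G (Pb j' i')) := by
    refine smul_heq hty _ _ (fun a x y hxy => ?_)
    have hval : x.1 = y.1 := subtype_val_eq hPQ hxy
    refine subtype_heq hPQ ?_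
    show (a • x.1.1, a • x.1.2) = (a • y.1.1, a • y.1.2)
    rw [hval]
  have hact : HEq (inferInstance : MulAction G (Pb j i)) (inferInstance : MulAction G (Pb j' i')) :=
    mulAction_heq hty _ _ hsmul
  refine ⟨finGSet_eq hty _ _ _ _ hact, ?_, ?_⟩
  · exact hom_heq hty _ _ _ hsmul (Pb.fstHom j i) (Pb.fstHom j' i')
      (fun x y hxy => congrArg Prod.fst (subtype_val_eq hPQ hxy))
  · exact hom_heq hty _ _ _ hsmul (Pb.sndHom j i) (Pb.sndHom j' i')
      (fun x y hxy => congrArg Prod.snd (subtype_val_eq hPQ hxy))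

theorem trres_congr (M : SemiMackey G) {E E' A B : FinGSet G} (h : E = E')
    (f : E.carrier →[G] B.carrier) (f' : E'.carrier →[G] B.carrier) (hf : HEq f f')
    (g : E.carrier →[G] A.carrier) (g' : E'.carrier →[G] A.carrier) (hg : HEq g g')
    (y : M.obj A) : M.tr f (M.res g y) = M.tr f' (M.res g' y) := by
  subst h; rw [eq_of_heq hf, eq_of_heq hg]

theorem res_tr_of_injective (M : SemiMackey G) {A B : FinGSet G}
    (w : A.carrier →[G] B.carrier) (hw : Function.Injective w) (y : M.obj A) :
    M.res w (M.tr w y) = y := by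
  have h1 := M.mackey w w y
  have h2 := M.mackey (gid G A.carrier) (gid G A.carrier) y
  rw [M.tr_id, M.res_id] at h2
  have hfs : Pb.sndHom (gid G A.carrier) (gid G A.carrier)
      = Pb.fstHom (gid G A.carrier) (gid G A.carrier) :=
    ghom_ext fun p => p.2.symm
  have hfs' : Pb.sndHom w w = Pb.fstHom w w := ghom_ext fun p => (hw p.2).symm
  rw [hfs'] at h1
  rw [hfs] at h2
  obtain ⟨hE, hf, -⟩ := pb_transport w w (gid G A.carrier) (gid G A.carrier)
    (fun a b => ⟨fun h => hw h, fun h => congrArg w h⟩)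
  rw [h1]
  conv_rhs => rw [h2]
  exact trres_congr M hE _ _ hf _ _ hf y

section Iso

variable (M : SemiMackey G) {A B : FinGSet G}
variable (u : A.carrier →[G] B.carrier) (v : B.carrier →[G] A.carrier)

theorem tr_eq_res_of_inv (hvu : ∀ a, v (u a) = a) (huv : ∀ b, u (v b) = b)
    (y : M.obj A) : M.tr u y = M.res v y := by
  have hinj : Function.Injective u := fun a a' h => by
    rw [← hvu a, ← hvu a', h]
  have h1 : M.res u (M.tr u y) = y := res_tr_of_injective M u hinj y
  have h2 : M.res u (M.res v y) = y := by
    rw [M.res_comp, (ghom_ext fun a => hvu a : gcomp v u = gid G A.carrier), M.res_id]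
  have hres_inj : Function.Injective (M.res u : M.obj B → M.obj A) := by
    intro z z' h
    have h3 := congrArg (M.res v) h
    rwa [M.res_comp, M.res_comp, (ghom_ext fun b => huv b : gcomp u v = gid G B.carrier),
      M.res_id, M.res_id] at h3
  exact hres_inj (h1.trans h2.symm)

theorem tr_res_of_inv (hvu : ∀ a, v (u a) = a) (huv : ∀ b, u (v b) = b)
    (z : M.obj B) : M.tr u (M.res u z) = z := by
  rw [tr_eq_res_of_inv M u v hvu huv, M.res_comp,
    (ghom_ext fun b => huv b : gcomp u v = gid G B.carrier), M.res_id]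

end Iso

theorem trres_iso (M : SemiMackey G) {P E A₁ A₂ : FinGSet G}
    (e : E.carrier →[G] P.carrier) (e' : P.carrier →[G] E.carrier)
    (he : ∀ x, e' (e x) = x) (he' : ∀ p, e (e' p) = p)
    (p₁ : P.carrier →[G] A₁.carrier) (p₂ : P.carrier →[G] A₂.carrier) (x : M.obj A₂) :
    M.tr p₁ (M.res p₂ x) = M.tr (gcomp p₁ e) (M.res (gcomp p₂ e) x) := by
  conv_rhs => rw [← M.tr_comp, ← M.res_comp]
  rw [tr_res_of_inv M e e' he he']

theorem exists_invHom {E P : Type} [MulAction G E] [MulAction G P] (e : E →[G] P)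
    (hinj : Function.Injective e) (hsurj : Function.Surjective e) :
    ∃ e' : P →[G] E, (∀ x, e' (e x) = x) ∧ (∀ p, e (e' p) = p) := by
  choose e' he' using hsurj
  have hve : ∀ x, e' (e x) = x := fun x => hinj (he' (e x))
  refine ⟨⟨e', fun a p => ?_⟩, hve, he'⟩
  apply hinj
  show e (e' (a • p)) = e (a • e' p)
  rw [he', MulActionHom.map_smul, he']

theorem obj_subsingleton_of_empty (M : SemiMackey G) (E : FinGSet G) (hE : E.carrier → False)
    (x y : M.obj E) : x = y := by
  have f : E.carrier →[G] (emptyG G).carrier := ⟨fun e => (hE e).elim, fun g e => (hE e).elim⟩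
  have key : ∀ z : M.obj E, z = M.res f (M.res (initHom E) z) := by
    intro z
    rw [M.res_comp, (ghom_ext fun e => (hE e).elim : gcomp (initHom E) f = gid G E.carrier),
      M.res_id]
  rw [key x, key y]
  congr 1
  exact @Subsingleton.elim _ M.empty_subsingleton _ _

theorem tr_of_empty (M : SemiMackey G) {E X : FinGSet G} (hE : E.carrier → False)
    (f : E.carrier →[G] X.carrier) (x : M.obj E) : M.tr f x = M.zero X := by
  have hf : f = gcomp (initHom X)
      (⟨fun e => (hE e).elim, fun g e => (hE e).elim⟩ : E.carrier →[G] (emptyG G).carrier) :=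
    ghom_ext fun e => (hE e).elim
  rw [hf, ← M.tr_comp]
  show M.tr (initHom X) _ = M.zero X
  unfold SemiMackey.zero
  congr 1
  exact @Subsingleton.elim _ M.empty_subsingleton _ _

theorem res_inl_pairElt (M : SemiMackey G) {X Y : FinGSet G} (x : M.obj X) (y : M.obj Y) :
    M.res (inlHom X Y) (M.pairElt x y) = x := by
  have h := Equiv.apply_symm_apply (Equiv.ofBijective _ (M.sum_bij X Y)) (x, y)
  exact congrArg Prod.fst h

theorem res_inr_pairElt (M : SemiMackey G) {X Y : FinGSet G} (x : M.obj X) (y : M.obj Y) :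
    M.res (inrHom X Y) (M.pairElt x y) = y := by
  have h := Equiv.apply_symm_apply (Equiv.ofBijective _ (M.sum_bij X Y)) (x, y)
  exact congrArg Prod.snd h

theorem pairElt_unique (M : SemiMackey G) {X Y : FinGSet G} (z : M.obj (sumG X Y))
    (x : M.obj X) (y : M.obj Y) (h1 : M.res (inlHom X Y) z = x) (h2 : M.res (inrHom X Y) z = y) :
    z = M.pairElt x y := by
  apply (M.sum_bij X Y).injective
  show (M.res (inlHom X Y) z, M.res (inrHom X Y) z)
      = (M.res (inlHom X Y) (M.pairElt x y), M.res (inrHom X Y) (M.pairElt x y))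
  rw [res_inl_pairElt, res_inr_pairElt, h1, h2]

end Part1

section SumCalc

variable {G : Type} [Group G]

/-- The canonical equivariant map from `X` to the pullback of `inl` along `f ⊕ g`. -/
def inlPb {X Y X' Y' : FinGSet G} (f : X.carrier →[G] X'.carrier)
    (g : Y.carrier →[G] Y'.carrier) :
    X.carrier →[G] Pb (inlHom X' Y') (sumMapHom f g) :=
  ⟨fun x => ⟨(f x, Sum.inl x), rfl⟩, fun a x => by
    apply Subtype.ext
    show (f (a • x), Sum.inl (a • x)) = (a • f x, a • Sum.inl x)
    rw [MulActionHom.map_smul]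
    rfl⟩

/-- The canonical equivariant map from `Y` to the pullback of `inr` along `f ⊕ g`. -/
def inrPb {X Y X' Y' : FinGSet G} (f : X.carrier →[G] X'.carrier)
    (g : Y.carrier →[G] Y'.carrier) :
    Y.carrier →[G] Pb (inrHom X' Y') (sumMapHom f g) :=
  ⟨fun y => ⟨(g y, Sum.inr y), rfl⟩, fun a y => by
    apply Subtype.ext
    show (g (a • y), Sum.inr (a • y)) = (a • g y, a • Sum.inr y)
    rw [MulActionHom.map_smul]
    rfl⟩

theorem res_inl_tr_sumMap (M : SemiMackey G) {X Y X' Y' : FinGSet G}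
    (f : X.carrier →[G] X'.carrier) (g : Y.carrier →[G] Y'.carrier) (z : M.obj (sumG X Y)) :
    M.res (inlHom X' Y') (M.tr (sumMapHom f g) z) = M.tr f (M.res (inlHom X Y) z) := by
  rw [M.mackey]
  have hinj : Function.Injective (inlPb f g) := by
    intro x x' h
    exact Sum.inl.inj (show Sum.inl x = Sum.inl x' from
      congrArg (fun q : Pb (inlHom X' Y') (sumMapHom f g) => q.1.2) h)
  have hsurj : Function.Surjective (inlPb f g) := by
    rintro ⟨⟨x', s⟩, hq⟩
    cases s with
    | inl x =>
      have hx : Sum.inl x' = Sum.inl (f x) := hq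
      refine ⟨x, Subtype.ext ?_⟩
      show (f x, Sum.inl x) = (x', Sum.inl x)
      rw [Sum.inl.inj hx]
    | inr y =>
      exact absurd (hq : Sum.inl x' = Sum.inr (g y)) (fun h => Sum.inl_ne_inr h)
  obtain ⟨e', h1, h2⟩ := exists_invHom (inlPb f g) hinj hsurj
  erw [trres_iso M (E := X) (P := mkG G (Pb (inlHom X' Y') (sumMapHom f g))) (inlPb f g) e' h1 h2]
  erw [(ghom_ext fun x => rfl :
        gcomp (Pb.fstHom (inlHom X' Y') (sumMapHom f g)) (inlPb f g) = f),
     (ghom_ext fun x => rfl :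
        gcomp (Pb.sndHom (inlHom X' Y') (sumMapHom f g)) (inlPb f g) = inlHom X Y)]

theorem res_inr_tr_sumMap (M : SemiMackey G) {X Y X' Y' : FinGSet G}
    (f : X.carrier →[G] X'.carrier) (g : Y.carrier →[G] Y'.carrier) (z : M.obj (sumG X Y)) :
    M.res (inrHom X' Y') (M.tr (sumMapHom f g) z) = M.tr g (M.res (inrHom X Y) z) := by
  rw [M.mackey]
  have hinj : Function.Injective (inrPb f g) := by
    intro y y' h
    exact Sum.inr.inj (show Sum.inr y = Sum.inr y' from
      congrArg (fun q : Pb (inrHom X' Y') (sumMapHom f g) => q.1.2) h)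
  have hsurj : Function.Surjective (inrPb f g) := by
    rintro ⟨⟨y', s⟩, hq⟩
    cases s with
    | inr y =>
      have hy : Sum.inr y' = Sum.inr (g y) := hq
      refine ⟨y, Subtype.ext ?_⟩
      show (g y, Sum.inr y) = (y', Sum.inr y)
      rw [Sum.inr.inj hy]
    | inl x =>
      exact absurd (hq : Sum.inr y' = Sum.inl (f x)) (fun h => Sum.inr_ne_inl h)
  obtain ⟨e', h1, h2⟩ := exists_invHom (inrPb f g) hinj hsurj
  erw [trres_iso M (E := Y) (P := mkG G (Pb (inrHom X' Y') (sumMapHom f g))) (inrPb f g) e' h1 h2]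
  erw [(ghom_ext fun y => rfl :
        gcomp (Pb.fstHom (inrHom X' Y') (sumMapHom f g)) (inrPb f g) = g),
     (ghom_ext fun y => rfl :
        gcomp (Pb.sndHom (inrHom X' Y') (sumMapHom f g)) (inrPb f g) = inrHom X Y)]

theorem res_inl_tr_inr (M : SemiMackey G) {X Y : FinGSet G} (y : M.obj Y) :
    M.res (inlHom X Y) (M.tr (inrHom X Y) y) = M.zero X := by
  rw [M.mackey]
  exact tr_of_empty M (E := mkG G (Pb (inlHom X Y) (inrHom X Y)))
    (fun q => Sum.inl_ne_inr
      ((q : Pb (inlHom X Y) (inrHom X Y)).2 : Sum.inl _ = Sum.inr _)) _ _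

theorem res_inr_tr_inl (M : SemiMackey G) {X Y : FinGSet G} (x : M.obj X) :
    M.res (inrHom X Y) (M.tr (inlHom X Y) x) = M.zero Y := by
  rw [M.mackey]
  exact tr_of_empty M (E := mkG G (Pb (inrHom X Y) (inlHom X Y)))
    (fun q => Sum.inr_ne_inl
      ((q : Pb (inrHom X Y) (inlHom X Y)).2 : Sum.inr _ = Sum.inl _)) _ _

theorem res_inl_tr_inl (M : SemiMackey G) {X Y : FinGSet G} (x : M.obj X) :
    M.res (inlHom X Y) (M.tr (inlHom X Y) x) = x :=
  res_tr_of_injective M (inlHom X Y) (fun _ _ h => Sum.inl.inj h) x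

theorem res_inr_tr_inr (M : SemiMackey G) {X Y : FinGSet G} (y : M.obj Y) :
    M.res (inrHom X Y) (M.tr (inrHom X Y) y) = y :=
  res_tr_of_injective M (inrHom X Y) (fun _ _ h => Sum.inr.inj h) y

theorem tr_pairElt (M : SemiMackey G) {X Y X' Y' : FinGSet G}
    (f : X.carrier →[G] X'.carrier) (g : Y.carrier →[G] Y'.carrier)
    (a : M.obj X) (b : M.obj Y) :
    M.tr (sumMapHom f g) (M.pairElt a b) = M.pairElt (M.tr f a) (M.tr g b) := by
  apply pairElt_unique
  · rw [res_inl_tr_sumMap, res_inl_pairElt]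
  · rw [res_inr_tr_sumMap, res_inr_pairElt]

end SumCalc

section Monoid

variable {G : Type} [Group G] (M : SemiMackey G) {X : FinGSet G}

theorem pairElt_zero_left (x : M.obj X) :
    M.pairElt (M.zero X) x = M.tr (inrHom X X) x :=
  ((pairElt_unique M _ _ _ (res_inl_tr_inr M x) (res_inr_tr_inr M x))).symm

theorem mzero_add (x : M.obj X) : M.add (M.zero X) x = x := by
  show M.tr (foldHom X) (M.pairElt (M.zero X) x) = x
  rw [pairElt_zero_left, M.tr_comp,
    (ghom_ext fun a => rfl : gcomp (foldHom X) (inrHom X X) = gid G X.carrier), M.tr_id]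

theorem res_swap_pairElt (x y : M.obj X) :
    M.res (sumElimHom (inrHom X X) (inlHom X X)) (M.pairElt x y) = M.pairElt y x := by
  apply pairElt_unique
  · rw [M.res_comp,
      (ghom_ext fun a => rfl :
        gcomp (sumElimHom (inrHom X X) (inlHom X X)) (inlHom X X) = inrHom X X),
      res_inr_pairElt]
  · rw [M.res_comp,
      (ghom_ext fun a => rfl :
        gcomp (sumElimHom (inrHom X X) (inlHom X X)) (inrHom X X) = inlHom X X),
      res_inl_pairElt]

theorem madd_comm (x y : M.obj X) : M.add x y = M.add y x := by
  show M.tr (foldHom X) (M.pairElt x y) = M.tr (foldHom X) (M.pairElt y x)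
  have hinv : ∀ s, (sumElimHom (inrHom X X) (inlHom X X))
      ((sumElimHom (inrHom X X) (inlHom X X)) s) = s := by
    intro s; cases s <;> rfl
  conv_rhs => rw [← res_swap_pairElt M x y]
  rw [← tr_eq_res_of_inv M (sumElimHom (inrHom X X) (inlHom X X))
      (sumElimHom (inrHom X X) (inlHom X X)) hinv hinv (M.pairElt x y),
    M.tr_comp,
    (ghom_ext (fun s => by cases s <;> rfl) :
      gcomp (foldHom X) (sumElimHom (inrHom X X) (inlHom X X)) = foldHom X)]

theorem madd_assoc (x y z : M.obj X) : M.add (M.add x y) z = M.add x (M.add y z) := by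
  show M.tr (foldHom X) (M.pairElt (M.tr (foldHom X) (M.pairElt x y)) z)
      = M.tr (foldHom X) (M.pairElt x (M.tr (foldHom X) (M.pairElt y z)))
  conv_lhs => rw [show z = M.tr (gid G X.carrier) z from (M.tr_id z).symm]
  conv_rhs => rw [show x = M.tr (gid G X.carrier) x from (M.tr_id x).symm]
  rw [← tr_pairElt M (foldHom X) (gid G X.carrier),
      ← tr_pairElt M (gid G X.carrier) (foldHom X), M.tr_comp, M.tr_comp]
  have hQ : M.res (sumElimHom (gcomp (inlHom (sumG X X) X) (inlHom X X))
        (sumMapHom (inrHom X X) (gid G X.carrier)))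
        (M.pairElt (M.pairElt x y) z) = M.pairElt x (M.pairElt y z) := by
    apply pairElt_unique
    · rw [M.res_comp,
        (ghom_ext fun a => rfl :
          gcomp (sumElimHom (gcomp (inlHom (sumG X X) X) (inlHom X X))
            (sumMapHom (inrHom X X) (gid G X.carrier))) (inlHom X (sumG X X))
          = gcomp (inlHom (sumG X X) X) (inlHom X X)),
        ← M.res_comp, res_inl_pairElt, res_inl_pairElt]
    · rw [M.res_comp,
        (ghom_ext fun a => rfl :
          gcomp (sumElimHom (gcomp (inlHom (sumG X X) X) (inlHom X X))
            (sumMapHom (inrHom X X) (gid G X.carrier))) (inrHom X (sumG X X))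
          = sumMapHom (inrHom X X) (gid G X.carrier))]
      apply pairElt_unique
      · rw [M.res_comp,
          (ghom_ext fun a => rfl :
            gcomp (sumMapHom (inrHom X X) (gid G X.carrier)) (inlHom X X)
            = gcomp (inlHom (sumG X X) X) (inrHom X X)),
          ← M.res_comp, res_inl_pairElt, res_inr_pairElt]
      · rw [M.res_comp,
          (ghom_ext fun a => rfl :
            gcomp (sumMapHom (inrHom X X) (gid G X.carrier)) (inrHom X X)
            = inrHom (sumG X X) X),
          res_inr_pairElt]
  conv_rhs => rw [← hQ]
  have hβα : ∀ s, (sumElimHom (gcomp (inlHom (sumG X X) X) (inlHom X X))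
      (sumMapHom (inrHom X X) (gid G X.carrier)))
      ((sumElimHom (sumMapHom (gid G X.carrier) (inlHom X X))
        (gcomp (inrHom X (sumG X X)) (inrHom X X))) s) = s := by
    intro s
    rcases s with s | z0
    · rcases s with x0 | y0 <;> rfl
    · rfl
  have hαβ : ∀ s, (sumElimHom (sumMapHom (gid G X.carrier) (inlHom X X))
      (gcomp (inrHom X (sumG X X)) (inrHom X X)))
      ((sumElimHom (gcomp (inlHom (sumG X X) X) (inlHom X X))
        (sumMapHom (inrHom X X) (gid G X.carrier))) s) = s := by
    intro s
    rcases s with x0 | s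
    · rfl
    · rcases s with y0 | z0 <;> rfl
  rw [← tr_eq_res_of_inv M
      (sumElimHom (sumMapHom (gid G X.carrier) (inlHom X X))
        (gcomp (inrHom X (sumG X X)) (inrHom X X)))
      (sumElimHom (gcomp (inlHom (sumG X X) X) (inlHom X X))
        (sumMapHom (inrHom X X) (gid G X.carrier))) hβα hαβ,
    M.tr_comp]
  congr 1
  apply ghom_ext
  intro s
  rcases s with s | z0
  · rcases s with x0 | y0 <;> rfl
  · rfl

theorem madd_zero (x : M.obj X) : M.add x (M.zero X) = x := by
  rw [madd_comm, mzero_add]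

theorem neg_unique {x y y' : M.obj X} (h : M.add x y = M.zero X)
    (h' : M.add x y' = M.zero X) : y = y' := by
  calc y = M.add y (M.zero X) := (madd_zero M y).symm
    _ = M.add y (M.add x y') := by rw [h']
    _ = M.add (M.add y x) y' := (madd_assoc M y x y').symm
    _ = M.add (M.add x y) y' := by rw [madd_comm M y x]
    _ = M.add (M.zero X) y' := by rw [h]
    _ = y' := mzero_add M y'

end Monoid

section HomLemmas

variable {G : Type} [Group G] {M N : SemiMackey G} (φ : SMackHom M N)

theorem app_pairElt {X Y : FinGSet G} (x : M.obj X) (y : M.obj Y) :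
    φ.app (sumG X Y) (M.pairElt x y) = N.pairElt (φ.app X x) (φ.app Y y) := by
  apply pairElt_unique
  · rw [← φ.app_res, res_inl_pairElt]
  · rw [← φ.app_res, res_inr_pairElt]

theorem app_zero (X : FinGSet G) : φ.app X (M.zero X) = N.zero X := by
  show φ.app X (M.tr (initHom X) _) = N.tr (initHom X) _
  rw [φ.app_tr]
  congr 1
  exact @Subsingleton.elim _ N.empty_subsingleton _ _

theorem app_add {X : FinGSet G} (x y : M.obj X) :
    φ.app X (M.add x y) = N.add (φ.app X x) (φ.app X y) := by
  show φ.app X (M.tr (foldHom X) (M.pairElt x y)) = _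
  rw [φ.app_tr, app_pairElt]
  rfl

end HomLemmas



section TermModel

variable {G : Type} [Group G]

/-- Terms of the free Tambara functor on a semi-Mackey functor `M`. -/
inductive Term (M : SemiMackey G) : FinGSet G → Type 1 where
  | of {X : FinGSet G} (x : M.obj X) : Term M X
  | res {X Y : FinGSet G} (f : X.carrier →[G] Y.carrier) (t : Term M Y) : Term M X
  | tr {X Y : FinGSet G} (f : X.carrier →[G] Y.carrier) (t : Term M X) : Term M Y
  | nm {X Y : FinGSet G} (f : X.carrier →[G] Y.carrier) (t : Term M X) : Term M Y
  | pair {X Y : FinGSet G} (s : Term M X) (t : Term M Y) : Term M (sumG X Y)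
  | neg {X : FinGSet G} (t : Term M X) : Term M X

/-- The congruence on terms generated by all Tambara functor axioms. -/
inductive TRel (M : SemiMackey G) : ∀ X : FinGSet G, Term M X → Term M X → Prop where
  | refl {X : FinGSet G} (t : Term M X) : TRel M X t t
  | symm {X : FinGSet G} {s t : Term M X} : TRel M X s t → TRel M X t s
  | trans {X : FinGSet G} {s t u : Term M X} : TRel M X s t → TRel M X t u → TRel M X s u
  | res_congr {X Y : FinGSet G} (f : X.carrier →[G] Y.carrier) {s t : Term M Y} :
      TRel M Y s t → TRel M X (.res f s) (.res f t)
  | tr_congr {X Y : FinGSet G} (f : X.carrier →[G] Y.carrier) {s t : Term M X} :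
      TRel M X s t → TRel M Y (.tr f s) (.tr f t)
  | nm_congr {X Y : FinGSet G} (f : X.carrier →[G] Y.carrier) {s t : Term M X} :
      TRel M X s t → TRel M Y (.nm f s) (.nm f t)
  | pair_congr {X Y : FinGSet G} {s s' : Term M X} {t t' : Term M Y} :
      TRel M X s s' → TRel M Y t t' → TRel M (sumG X Y) (.pair s t) (.pair s' t')
  | neg_congr {X : FinGSet G} {s t : Term M X} : TRel M X s t → TRel M X (.neg s) (.neg t)
  | of_res {X Y : FinGSet G} (f : X.carrier →[G] Y.carrier) (y : M.obj Y) :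
      TRel M X (.of (M.res f y)) (.res f (.of y))
  | of_tr {X Y : FinGSet G} (f : X.carrier →[G] Y.carrier) (x : M.obj X) :
      TRel M Y (.of (M.tr f x)) (.tr f (.of x))
  | res_id {X : FinGSet G} (t : Term M X) : TRel M X (.res (gid G X.carrier) t) t
  | res_comp {X Y Z : FinGSet G} (i : X.carrier →[G] Y.carrier) (j : Y.carrier →[G] Z.carrier)
      (t : Term M Z) : TRel M X (.res i (.res j t)) (.res (gcomp j i) t)
  | tr_id {X : FinGSet G} (t : Term M X) : TRel M X (.tr (gid G X.carrier) t) t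
  | tr_comp {X Y Z : FinGSet G} (i : X.carrier →[G] Y.carrier) (j : Y.carrier →[G] Z.carrier)
      (t : Term M X) : TRel M Z (.tr j (.tr i t)) (.tr (gcomp j i) t)
  | nm_id {X : FinGSet G} (t : Term M X) : TRel M X (.nm (gid G X.carrier) t) t
  | nm_comp {X Y Z : FinGSet G} (i : X.carrier →[G] Y.carrier) (j : Y.carrier →[G] Z.carrier)
      (t : Term M X) : TRel M Z (.nm j (.nm i t)) (.nm (gcomp j i) t)
  | mackey {X Y Z : FinGSet G} (j : X.carrier →[G] Z.carrier) (i : Y.carrier →[G] Z.carrier)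
      (t : Term M Y) :
      TRel M X (.res j (.tr i t))
        (.tr (Pb.fstHom j i) (.res (X := mkG G (Pb j i)) (Pb.sndHom j i) t))
  | nm_res {X Y Z : FinGSet G} (j : X.carrier →[G] Z.carrier) (i : Y.carrier →[G] Z.carrier)
      (t : Term M Y) :
      TRel M X (.res j (.nm i t))
        (.nm (Pb.fstHom j i) (.res (X := mkG G (Pb j i)) (Pb.sndHom j i) t))
  | distrib {X Y Z A B : FinGSet G} (i : X.carrier →[G] Y.carrier)
      (j : Y.carrier →[G] Z.carrier) (f : A.carrier →[G] X.carrier)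
      (g : A.carrier →[G] B.carrier) (h : B.carrier →[G] Z.carrier) :
      IsDistributor i j f g h → ∀ t : Term M X,
      TRel M Z (.nm j (.tr i t)) (.tr h (.nm g (.res f t)))
  | pair_inl {X Y : FinGSet G} (s : Term M X) (t : Term M Y) :
      TRel M X (.res (inlHom X Y) (.pair s t)) s
  | pair_inr {X Y : FinGSet G} (s : Term M X) (t : Term M Y) :
      TRel M Y (.res (inrHom X Y) (.pair s t)) t
  | pair_eta {X Y : FinGSet G} (z : Term M (sumG X Y)) :
      TRel M (sumG X Y) (.pair (.res (inlHom X Y) z) (.res (inrHom X Y) z)) z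
  | add_neg {X : FinGSet G} (t : Term M X) (e : Term M (emptyG G)) :
      TRel M X (.tr (foldHom X) (.pair t (.neg t))) (.tr (initHom X) e)
  | empty_all (s t : Term M (emptyG G)) : TRel M (emptyG G) s t

variable (M : SemiMackey G)

/-- The value of the free Tambara functor at `X`. -/
def FT (X : FinGSet G) : Type 1 := Quot (TRel M X)

/-- Class of a term. -/
def FT.mk {X : FinGSet G} (t : Term M X) : FT M X := Quot.mk _ t

def FT.res {X Y : FinGSet G} (f : X.carrier →[G] Y.carrier) : FT M Y → FT M X :=
  Quot.map (Term.res f) (fun _ _ h => TRel.res_congr f h)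

def FT.tr {X Y : FinGSet G} (f : X.carrier →[G] Y.carrier) : FT M X → FT M Y :=
  Quot.map (Term.tr f) (fun _ _ h => TRel.tr_congr f h)

def FT.nm {X Y : FinGSet G} (f : X.carrier →[G] Y.carrier) : FT M X → FT M Y :=
  Quot.map (Term.nm f) (fun _ _ h => TRel.nm_congr f h)

def FT.pairQ {X Y : FinGSet G} (a : FT M X) (b : FT M Y) : FT M (sumG X Y) :=
  Quot.liftOn a
    (fun s => Quot.liftOn b (fun t => FT.mk M (.pair s t))
      (fun _ _ h => Quot.sound (TRel.pair_congr (TRel.refl _) h)))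
    (fun s s' hs => by
      induction b using Quot.ind with
      | _ t => exact Quot.sound (TRel.pair_congr hs (TRel.refl _)))

theorem FT.pairQ_mk {X Y : FinGSet G} (s : Term M X) (t : Term M Y) :
    FT.pairQ M (FT.mk M s) (FT.mk M t) = FT.mk M (.pair s t) := rfl

/-- The free semi-Tambara functor on a semi-Mackey functor. -/
def freeSemi : SemiTambara G where
  obj X := FT M X
  nonempty X := ⟨FT.mk M (.of (M.nonempty X).some)⟩
  res f := FT.res M f
  tr f := FT.tr M f
  nm f := FT.nm M f
  res_id x := by
    induction x using Quot.ind with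
    | _ t => exact Quot.sound (TRel.res_id t)
  res_comp i j z := by
    induction z using Quot.ind with
    | _ t => exact Quot.sound (TRel.res_comp i j t)
  tr_id x := by
    induction x using Quot.ind with
    | _ t => exact Quot.sound (TRel.tr_id t)
  tr_comp i j x := by
    induction x using Quot.ind with
    | _ t => exact Quot.sound (TRel.tr_comp i j t)
  nm_id x := by
    induction x using Quot.ind with
    | _ t => exact Quot.sound (TRel.nm_id t)
  nm_comp i j x := by
    induction x using Quot.ind with
    | _ t => exact Quot.sound (TRel.nm_comp i j t)
  mackey j i y := by
    induction y using Quot.ind with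
    | _ t => exact Quot.sound (TRel.mackey j i t)
  nm_res j i y := by
    induction y using Quot.ind with
    | _ t => exact Quot.sound (TRel.nm_res j i t)
  distrib i j f g h hd x := by
    induction x using Quot.ind with
    | _ t => exact Quot.sound (TRel.distrib i j f g h hd t)
  sum_bij X Y := by
    constructor
    · intro z z' h
      induction z using Quot.ind with
      | _ t =>
        induction z' using Quot.ind with
        | _ t' =>
          have h1 : FT.res M (inlHom X Y) (FT.mk M t) = FT.res M (inlHom X Y) (FT.mk M t') :=
            congrArg Prod.fst h
          have h2 : FT.res M (inrHom X Y) (FT.mk M t) = FT.res M (inrHom X Y) (FT.mk M t') :=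
            congrArg Prod.snd h
          have e1 : FT.mk M t = FT.pairQ M (FT.res M (inlHom X Y) (FT.mk M t))
              (FT.res M (inrHom X Y) (FT.mk M t)) := (Quot.sound (TRel.pair_eta t)).symm
          have e2 : FT.mk M t' = FT.pairQ M (FT.res M (inlHom X Y) (FT.mk M t'))
              (FT.res M (inrHom X Y) (FT.mk M t')) := (Quot.sound (TRel.pair_eta t')).symm
          show FT.mk M t = FT.mk M t'
          rw [e1, e2, h1, h2]
    · rintro ⟨a, b⟩
      induction a using Quot.ind with
      | _ s =>
        induction b using Quot.ind with
        | _ t =>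
          refine ⟨FT.mk M (.pair s t), Prod.ext ?_ ?_⟩
          · exact Quot.sound (TRel.pair_inl s t)
          · exact Quot.sound (TRel.pair_inr s t)
  empty_subsingleton := by
    constructor
    intro a b
    induction a using Quot.ind with
    | _ s =>
      induction b using Quot.ind with
      | _ t => exact Quot.sound (TRel.empty_all s t)

theorem freeSemi_pairElt {X Y : FinGSet G} (s : Term M X) (t : Term M Y) :
    (freeSemi M).toSemiMackey.pairElt (FT.mk M s) (FT.mk M t) = FT.mk M (.pair s t) := by
  have p1 : (freeSemi M).res (inlHom X Y) (FT.mk M (Term.pair s t)) = FT.mk M s :=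
    Quot.sound (TRel.pair_inl s t)
  have p2 : (freeSemi M).res (inrHom X Y) (FT.mk M (Term.pair s t)) = FT.mk M t :=
    Quot.sound (TRel.pair_inr s t)
  exact (pairElt_unique (freeSemi M).toSemiMackey (FT.mk M (Term.pair s t))
    (FT.mk M s) (FT.mk M t) p1 p2).symm

theorem freeSemi_add_neg {X : FinGSet G} (t : Term M X) :
    (freeSemi M).toSemiMackey.add (FT.mk M t) (FT.mk M (.neg t))
      = (freeSemi M).toSemiMackey.zero X := by
  show (freeSemi M).tr (foldHom X)
      ((freeSemi M).toSemiMackey.pairElt (FT.mk M t) (FT.mk M (.neg t)))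
    = (freeSemi M).tr (initHom X) ((freeSemi M).nonempty (emptyG G)).some
  rw [freeSemi_pairElt]
  have h1 : (freeSemi M).tr (foldHom X) (FT.mk M (.pair t (.neg t)))
      = FT.mk M (.tr (initHom X) (.of (M.nonempty (emptyG G)).some)) :=
    Quot.sound (TRel.add_neg t (.of (M.nonempty (emptyG G)).some))
  rw [h1]
  show (freeSemi M).tr (initHom X) (FT.mk M (.of (M.nonempty (emptyG G)).some))
    = (freeSemi M).tr (initHom X) ((freeSemi M).nonempty (emptyG G)).some
  congr 1
  exact @Subsingleton.elim _ (freeSemi M).empty_subsingleton _ _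

theorem freeSemi_hasNeg (X : FinGSet G) (x : (freeSemi M).obj X) :
    ∃ y, (freeSemi M).toSemiMackey.add x y = (freeSemi M).toSemiMackey.zero X := by
  induction x using Quot.ind with
  | _ t => exact ⟨FT.mk M (.neg t), freeSemi_add_neg M t⟩

/-- The free Tambara functor on a Mackey functor. -/
def freeTamb (N : Mackey G) : Tambara G :=
  ⟨freeSemi N.toSemiMackey, freeSemi_hasNeg N.toSemiMackey⟩

end TermModel


section Funct

variable {G : Type} [Group G]

/-- Functoriality of terms in the Mackey functor. -/
def Term.map {M N : SemiMackey G} (φ : SMackHom M N) : ∀ {X : FinGSet G}, Term M X → Term N X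
  | _, .of x => .of (φ.app _ x)
  | _, .res f t => .res f (Term.map φ t)
  | _, .tr f t => .tr f (Term.map φ t)
  | _, .nm f t => .nm f (Term.map φ t)
  | _, .pair s t => .pair (Term.map φ s) (Term.map φ t)
  | _, .neg t => .neg (Term.map φ t)

theorem TRel.map {M N : SemiMackey G} (φ : SMackHom M N) {X : FinGSet G} {s t : Term M X}
    (h : TRel M X s t) : TRel N X (s.map φ) (t.map φ) := by
  induction h with
  | refl t => exact TRel.refl _
  | symm _ ih => exact TRel.symm ih
  | trans _ _ ih1 ih2 => exact TRel.trans ih1 ih2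
  | res_congr f _ ih => exact TRel.res_congr f ih
  | tr_congr f _ ih => exact TRel.tr_congr f ih
  | nm_congr f _ ih => exact TRel.nm_congr f ih
  | pair_congr _ _ ih1 ih2 => exact TRel.pair_congr ih1 ih2
  | neg_congr _ ih => exact TRel.neg_congr ih
  | of_res f y =>
      show TRel N _ (.of (φ.app _ (M.res f y))) (.res f (.of (φ.app _ y)))
      rw [φ.app_res]
      exact TRel.of_res f (φ.app _ y)
  | of_tr f x =>
      show TRel N _ (.of (φ.app _ (M.tr f x))) (.tr f (.of (φ.app _ x)))
      rw [φ.app_tr]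
      exact TRel.of_tr f (φ.app _ x)
  | res_id t => exact TRel.res_id _
  | res_comp i j t => exact TRel.res_comp i j _
  | tr_id t => exact TRel.tr_id _
  | tr_comp i j t => exact TRel.tr_comp i j _
  | nm_id t => exact TRel.nm_id _
  | nm_comp i j t => exact TRel.nm_comp i j _
  | mackey j i t => exact TRel.mackey j i _
  | nm_res j i t => exact TRel.nm_res j i _
  | distrib i j f g h hd t => exact TRel.distrib i j f g h hd _
  | pair_inl s t => exact TRel.pair_inl _ _
  | pair_inr s t => exact TRel.pair_inr _ _
  | pair_eta z => exact TRel.pair_eta _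
  | add_neg t e => exact TRel.add_neg _ _
  | empty_all s t => exact TRel.empty_all _ _

theorem Term.map_id (M : SemiMackey G) {X : FinGSet G} (t : Term M X) :
    Term.map (SMackHom.idH M) t = t := by
  induction t with
  | of x => rfl
  | res f t ih => show Term.res f _ = _; rw [ih]
  | tr f t ih => show Term.tr f _ = _; rw [ih]
  | nm f t ih => show Term.nm f _ = _; rw [ih]
  | pair s t ih1 ih2 => show Term.pair _ _ = _; rw [ih1, ih2]
  | neg t ih => show Term.neg _ = _; rw [ih]

theorem Term.map_comp {M N P : SemiMackey G} (φ : SMackHom M N) (ψ : SMackHom N P)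
    {X : FinGSet G} (t : Term M X) :
    Term.map ψ (Term.map φ t) = Term.map (SMackHom.compH φ ψ) t := by
  induction t with
  | of x => rfl
  | res f t ih => show Term.res f _ = Term.res f _; rw [ih]
  | tr f t ih => show Term.tr f _ = Term.tr f _; rw [ih]
  | nm f t ih => show Term.nm f _ = Term.nm f _; rw [ih]
  | pair s t ih1 ih2 => show Term.pair _ _ = Term.pair _ _; rw [ih1, ih2]
  | neg t ih => show Term.neg _ = Term.neg _; rw [ih]

/-- The free Tambara functor on morphisms. -/
def freeTambMap {M N : Mackey G} (φ : SMackHom M.toSemiMackey N.toSemiMackey) :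
    STambHom (freeTamb M).toSemiTambara (freeTamb N).toSemiTambara :=
  ⟨⟨fun _ => Quot.map (Term.map φ) (fun _ _ h => h.map φ),
    fun f y => by induction y using Quot.ind with | _ t => rfl,
    fun f x => by induction x using Quot.ind with | _ t => rfl⟩,
   fun f x => by induction x using Quot.ind with | _ t => rfl⟩

open CategoryTheory in
/-- The free Tambara functor `Mack(G) → Tamb(G)`. -/
def freeFunctor (G : Type) [Group G] : Mackey G ⥤ Tambara G where
  obj M := freeTamb M
  map φ := freeTambMap φ
  map_id M := by
    apply STambHom.extH
    funext X x
    induction x using Quot.ind with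
    | _ t =>
      show FT.mk _ (Term.map (SMackHom.idH _) t) = FT.mk _ t
      rw [Term.map_id]
  map_comp φ ψ := by
    apply STambHom.extH
    funext X x
    induction x using Quot.ind with
    | _ t =>
      show FT.mk _ (Term.map (SMackHom.compH φ ψ) t)
          = FT.mk _ (Term.map ψ (Term.map φ t))
      rw [Term.map_comp]

/-- The unit of the free-forgetful adjunction. -/
def thetaSM (M : Mackey G) : SMackHom M.toSemiMackey (freeTamb M).toSemiMackey :=
  ⟨fun _ x => FT.mk _ (.of x),
   fun f y => Quot.sound (TRel.of_res f y),
   fun f x => Quot.sound (TRel.of_tr f x)⟩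

/-- Evaluation of a term in a Tambara functor along a Mackey map of the generators. -/
noncomputable def evTerm {M : SemiMackey G} (S : Tambara G) (φ : SMackHom M S.toSemiMackey) :
    ∀ {X : FinGSet G}, Term M X → S.obj X
  | _, .of x => φ.app _ x
  | _, .res f t => S.res f (evTerm S φ t)
  | _, .tr f t => S.tr f (evTerm S φ t)
  | _, .nm f t => S.nm f (evTerm S φ t)
  | _, .pair s t => S.toSemiMackey.pairElt (evTerm S φ s) (evTerm S φ t)
  | _, .neg t => Classical.choose (S.hasNeg _ (evTerm S φ t))

theorem evTerm_rel {M : SemiMackey G} (S : Tambara G) (φ : SMackHom M S.toSemiMackey)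
    {X : FinGSet G} {s t : Term M X} (h : TRel M X s t) : evTerm S φ s = evTerm S φ t := by
  induction h with
  | refl t => rfl
  | symm _ ih => exact ih.symm
  | trans _ _ ih1 ih2 => exact ih1.trans ih2
  | res_congr f _ ih => exact congrArg (S.res f) ih
  | tr_congr f _ ih => exact congrArg (S.tr f) ih
  | nm_congr f _ ih => exact congrArg (S.nm f) ih
  | pair_congr _ _ ih1 ih2 =>
      show S.toSemiMackey.pairElt _ _ = S.toSemiMackey.pairElt _ _
      rw [ih1, ih2]
  | neg_congr _ ih =>
      show Classical.choose _ = Classical.choose _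
      congr 1
      rw [ih]
  | of_res f y => exact φ.app_res f y
  | of_tr f x => exact φ.app_tr f x
  | res_id t => exact S.res_id _
  | res_comp i j t => exact S.res_comp i j _
  | tr_id t => exact S.tr_id _
  | tr_comp i j t => exact S.tr_comp i j _
  | nm_id t => exact S.nm_id _
  | nm_comp i j t => exact S.nm_comp i j _
  | mackey j i t => exact S.mackey j i _
  | nm_res j i t => exact S.nm_res j i _
  | distrib i j f g h hd t => exact S.distrib i j f g h hd _
  | pair_inl s t => exact res_inl_pairElt S.toSemiMackey _ _
  | pair_inr s t => exact res_inr_pairElt S.toSemiMackey _ _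
  | pair_eta z => exact (pairElt_unique S.toSemiMackey _ _ _ rfl rfl).symm
  | add_neg t e =>
      have h1 : S.toSemiMackey.add (evTerm S φ t)
          (Classical.choose (S.hasNeg _ (evTerm S φ t))) = S.toSemiMackey.zero _ :=
        Classical.choose_spec (S.hasNeg _ (evTerm S φ t))
      show S.tr (foldHom _) (S.toSemiMackey.pairElt _ _) = S.tr (initHom _) _
      refine (h1.trans ?_)
      show S.tr (initHom _) _ = S.tr (initHom _) _
      congr 1
      exact @Subsingleton.elim _ S.empty_subsingleton _ _
  | empty_all s t =>
      exact obj_subsingleton_of_empty S.toSemiMackey (emptyG G) (fun e => e.elim) _ _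

/-- Evaluation as a map of Tambara functors `T(M) → S`. -/
noncomputable def evHom {M : SemiMackey G} (S : Tambara G) (φ : SMackHom M S.toSemiMackey) :
    STambHom (freeSemi M) S.toSemiTambara :=
  ⟨⟨fun _ => Quot.lift (evTerm S φ) (fun _ _ h => evTerm_rel S φ h),
    fun f y => by induction y using Quot.ind with | _ t => rfl,
    fun f x => by induction x using Quot.ind with | _ t => rfl⟩,
   fun f x => by induction x using Quot.ind with | _ t => rfl⟩

theorem evTerm_map {M N : SemiMackey G} (S : Tambara G) (φ : SMackHom M N)
    (ψ : SMackHom N S.toSemiMackey) {X : FinGSet G} (t : Term M X) :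
    evTerm S ψ (Term.map φ t) = evTerm S (SMackHom.compH φ ψ) t := by
  induction t with
  | of x => rfl
  | res f t ih => show S.res f _ = S.res f _; rw [ih]
  | tr f t ih => show S.tr f _ = S.tr f _; rw [ih]
  | nm f t ih => show S.nm f _ = S.nm f _; rw [ih]
  | pair s t ih1 ih2 =>
      show S.toSemiMackey.pairElt _ _ = S.toSemiMackey.pairElt _ _
      rw [ih1, ih2]
  | neg t ih =>
      show Classical.choose _ = Classical.choose _
      congr 1
      rw [ih]

theorem app_evTerm {M : SemiMackey G} {S S' : Tambara G}
    (h : STambHom S.toSemiTambara S'.toSemiTambara) (φ : SMackHom M S.toSemiMackey)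
    {X : FinGSet G} (t : Term M X) :
    h.app X (evTerm S φ t) = evTerm S' (SMackHom.compH φ h.toSMackHom) t := by
  induction t with
  | of x => rfl
  | res f t ih => rw [show evTerm S φ (.res f t) = S.res f (evTerm S φ t) from rfl,
      h.app_res, ih]; rfl
  | tr f t ih => rw [show evTerm S φ (.tr f t) = S.tr f (evTerm S φ t) from rfl,
      h.app_tr, ih]; rfl
  | nm f t ih => rw [show evTerm S φ (.nm f t) = S.nm f (evTerm S φ t) from rfl,
      h.app_nm, ih]; rfl
  | pair s t ih1 ih2 =>
      rw [show evTerm S φ (.pair s t)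
          = S.toSemiMackey.pairElt (evTerm S φ s) (evTerm S φ t) from rfl,
        app_pairElt h.toSMackHom, ih1, ih2]
      rfl
  | neg t ih =>
      have h1 : S.toSemiMackey.add (evTerm S φ t)
          (Classical.choose (S.hasNeg _ (evTerm S φ t))) = S.toSemiMackey.zero _ :=
        Classical.choose_spec (S.hasNeg _ (evTerm S φ t))
      have h2 := congrArg (h.app _) h1
      rw [app_add h.toSMackHom, app_zero h.toSMackHom, ih] at h2
      have h3 : S'.toSemiMackey.add (evTerm S' (SMackHom.compH φ h.toSMackHom) t)
          (Classical.choose (S'.hasNeg _ (evTerm S' (SMackHom.compH φ h.toSMackHom) t)))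
          = S'.toSemiMackey.zero _ :=
        Classical.choose_spec (S'.hasNeg _ _)
      exact neg_unique S'.toSemiMackey h2 h3

theorem evTerm_theta (M : Mackey G) {X : FinGSet G} (t : Term M.toSemiMackey X) :
    evTerm (freeTamb M) (thetaSM M) t = FT.mk _ t := by
  induction t with
  | of x => rfl
  | res f t ih =>
      show (freeTamb M).res f _ = _
      rw [ih]; rfl
  | tr f t ih =>
      show (freeTamb M).tr f _ = _
      rw [ih]; rfl
  | nm f t ih =>
      show (freeTamb M).nm f _ = _
      rw [ih]; rfl
  | pair s t ih1 ih2 =>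
      show (freeTamb M).toSemiMackey.pairElt _ _ = _
      rw [ih1, ih2]
      exact freeSemi_pairElt M.toSemiMackey s t
  | neg t ih =>
      show Classical.choose ((freeTamb M).hasNeg _ _) = _
      have h1 := Classical.choose_spec ((freeTamb M).hasNeg _ (evTerm (freeTamb M) (thetaSM M) t))
      rw [ih] at h1 ⊢
      have h2 : (freeTamb M).toSemiMackey.add (FT.mk _ t) (FT.mk _ (.neg t))
          = (freeTamb M).toSemiMackey.zero _ := freeSemi_add_neg M.toSemiMackey t
      exact neg_unique (freeTamb M).toSemiMackey h1 h2

open CategoryTheory in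
/-- The free-forgetful adjunction for Tambara functors. -/
noncomputable def freeAdj (G : Type) [Group G] : freeFunctor G ⊣ forgetTM G where
  unit :=
    { app := fun M => thetaSM M
      naturality := fun M N φ => by
        apply SMackHom.extH
        funext X x
        rfl }
  counit :=
    { app := fun S => evHom S (SMackHom.idH S.toSemiMackey)
      naturality := fun S S' h => by
        apply STambHom.extH
        funext X x
        induction x using Quot.ind with
        | _ t =>
          show evTerm S' (SMackHom.idH _) (Term.map h.toSMackHom t)
              = h.app X (evTerm S (SMackHom.idH _) t)
          erw [evTerm_map, app_evTerm h (SMackHom.idH S.toSemiMackey) t]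
          rfl }
  left_triangle_components M := by
    apply STambHom.extH
    funext X x
    induction x using Quot.ind with
    | _ t =>
      show evTerm (freeTamb M) (SMackHom.idH _) (Term.map (thetaSM M) t) = FT.mk _ t
      rw [evTerm_map]
      exact evTerm_theta M t
  right_triangle_components S := by
    apply SMackHom.extH
    funext X x
    rfl

end Funct


section Comparison

open CategoryTheory

variable {G : Type} [Group G]

instance forgetTM_faithful : (forgetTM G).Faithful where
  map_injective h := STambHom.extH (congrArg SMackHom.app h)

theorem norm_formula (S : Tambara G) {X Y : FinGSet G} (f : X.carrier →[G] Y.carrier)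
    (x : S.obj X) :
    S.nm f x = SMackHom.app ((forgetTM G).map ((freeAdj G).counit.app S)) Y
      (((freeFunctor G).obj ((forgetTM G).obj S)).nm f
        (SMackHom.app ((freeAdj G).unit.app ((forgetTM G).obj S)) X x)) := rfl

/-- The semi-Tambara structure on the underlying Mackey functor of a `𝕋`-algebra. -/
def algSemi (N : Mackey G) (m : SMackHom (freeTamb N).toSemiMackey N.toSemiMackey)
    (hunit : ∀ (X : FinGSet G) (x : N.obj X), m.app X (FT.mk N.toSemiMackey (.of x)) = x)
    (hassoc : ∀ (X : FinGSet G) (z : Term (freeTamb N).toSemiMackey X),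
      m.app X (evTerm (freeTamb N) (SMackHom.idH (freeTamb N).toSemiMackey) z)
        = m.app X (FT.mk N.toSemiMackey (Term.map m z))) : SemiTambara G where
  toSemiMackey := N.toSemiMackey
  nm f x := m.app _ (FT.mk _ (.nm f (.of x)))
  nm_id x := (congrArg (m.app _) (Quot.sound (TRel.nm_id (.of x)))).trans (hunit _ x)
  nm_comp {X Y Z} i j x := by
    have h1 := hassoc Z (.nm j (.of (FT.mk N.toSemiMackey (.nm i (.of x)))))
    have h2 : m.app Z (FT.mk N.toSemiMackey (.nm j (.nm i (.of x))))
        = m.app Z (FT.mk _ (.nm (gcomp j i) (.of x))) :=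
      congrArg _ (Quot.sound (TRel.nm_comp i j (.of x)))
    exact h1.symm.trans h2
  nm_res {X Y Z} j i y := by
    erw [← m.app_res]
    refine congrArg (m.app _) ?_
    refine Eq.trans (Quot.sound (TRel.nm_res j i (.of y))) ?_
    exact Quot.sound (TRel.nm_congr _ (TRel.symm (TRel.of_res _ y)))
  distrib {X Y Z A B} i j f g h hd x := by
    erw [← m.app_tr]
    refine congrArg (m.app _) ?_
    refine Eq.trans (Quot.sound (TRel.nm_congr j (TRel.of_tr i x))) ?_
    refine Eq.trans (Quot.sound (TRel.distrib i j f g h hd (.of x))) ?_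
    exact Quot.sound (TRel.tr_congr h (TRel.nm_congr g (TRel.symm (TRel.of_res f x))))

/-- The Tambara functor associated to a `𝕋`-algebra. -/
def algTamb (N : Mackey G) (m : SMackHom (freeTamb N).toSemiMackey N.toSemiMackey)
    (hunit : ∀ (X : FinGSet G) (x : N.obj X), m.app X (FT.mk N.toSemiMackey (.of x)) = x)
    (hassoc : ∀ (X : FinGSet G) (z : Term (freeTamb N).toSemiMackey X),
      m.app X (evTerm (freeTamb N) (SMackHom.idH (freeTamb N).toSemiMackey) z)
        = m.app X (FT.mk N.toSemiMackey (Term.map m z))) : Tambara G :=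
  ⟨algSemi N m hunit hassoc, N.hasNeg⟩

theorem evTerm_alg (N : Mackey G) (m : SMackHom (freeTamb N).toSemiMackey N.toSemiMackey)
    (hunit : ∀ (X : FinGSet G) (x : N.obj X), m.app X (FT.mk N.toSemiMackey (.of x)) = x)
    (hassoc : ∀ (X : FinGSet G) (z : Term (freeTamb N).toSemiMackey X),
      m.app X (evTerm (freeTamb N) (SMackHom.idH (freeTamb N).toSemiMackey) z)
        = m.app X (FT.mk N.toSemiMackey (Term.map m z)))
    {X : FinGSet G} (t : Term N.toSemiMackey X) :
    evTerm (algTamb N m hunit hassoc) (SMackHom.idH N.toSemiMackey) t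
      = m.app X (FT.mk N.toSemiMackey t) := by
  induction t with
  | of x => exact (hunit _ x).symm
  | res f t ih =>
      show N.res f _ = _
      erw [ih, ← m.app_res]
      rfl
  | tr f t ih =>
      show N.tr f _ = _
      erw [ih, ← m.app_tr]
      rfl
  | nm f t ih =>
      show m.app _ (FT.mk _ (.nm f (.of _))) = _
      rw [ih]
      have h1 := hassoc _ (.nm f (.of (FT.mk N.toSemiMackey t)))
      exact h1.symm
  | pair s t ih1 ih2 =>
      show N.toSemiMackey.pairElt _ _ = _
      erw [ih1, ih2, ← app_pairElt m]
      exact congrArg (m.app _) (freeSemi_pairElt N.toSemiMackey s t)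
  | neg t ih =>
      show Classical.choose ((algTamb N m hunit hassoc).hasNeg _ _) = _
      rw [ih]
      have h1 := Classical.choose_spec
        (N.hasNeg _ (m.app _ (FT.mk N.toSemiMackey t)))
      have h2 : N.toSemiMackey.add (m.app _ (FT.mk N.toSemiMackey t))
          (m.app _ (FT.mk N.toSemiMackey (.neg t))) = N.toSemiMackey.zero _ := by
        erw [← app_add m, ← app_zero m]
        exact congrArg (m.app _) (freeSemi_add_neg N.toSemiMackey t)
      exact neg_unique N.toSemiMackey h1 h2

theorem counit_alg (N : Mackey G) (m : SMackHom (freeTamb N).toSemiMackey N.toSemiMackey)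
    (hunit : ∀ (X : FinGSet G) (x : N.obj X), m.app X (FT.mk N.toSemiMackey (.of x)) = x)
    (hassoc : ∀ (X : FinGSet G) (z : Term (freeTamb N).toSemiMackey X),
      m.app X (evTerm (freeTamb N) (SMackHom.idH (freeTamb N).toSemiMackey) z)
        = m.app X (FT.mk N.toSemiMackey (Term.map m z))) :
    (forgetTM G).map ((freeAdj G).counit.app (algTamb N m hunit hassoc)) = m := by
  apply SMackHom.extH
  funext X z
  induction z using Quot.ind with
  | _ t => exact evTerm_alg N m hunit hassoc t

theorem algebra_ext {C : Type _} [Category C] {T : Monad C} {A B : T.Algebra}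
    (h1 : A.A = B.A) (h2 : HEq A.a B.a) : A = B := by
  obtain ⟨AA, aa, u1, s1⟩ := A
  obtain ⟨BB, bb, u2, s2⟩ := B
  dsimp at h1
  subst h1
  have h3 : aa = bb := eq_of_heq h2
  subst h3
  rfl

theorem comparison_obj_surj :
    Function.Surjective (Monad.comparison (freeAdj G)).obj := by
  rintro ⟨N, m, hu, ha⟩
  have hunit : ∀ (X : FinGSet G) (x : N.obj X), m.app X (FT.mk N.toSemiMackey (.of x)) = x :=
    fun X x => congrArg (fun ψ : (N ⟶ N) => ψ.app X x) hu
  have hassoc : ∀ (X : FinGSet G) (z : Term (freeTamb N).toSemiMackey X),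
      m.app X (evTerm (freeTamb N) (SMackHom.idH (freeTamb N).toSemiMackey) z)
        = m.app X (FT.mk N.toSemiMackey (Term.map m z)) :=
    fun X z => congrArg
      (fun ψ : ((freeAdj G).toMonad.obj ((freeAdj G).toMonad.obj N) ⟶ N) =>
        ψ.app X (FT.mk (freeTamb N).toSemiMackey z)) ha
  exact ⟨algTamb N m hunit hassoc,
    algebra_ext rfl (heq_of_eq (counit_alg N m hunit hassoc))⟩

theorem comparison_obj_inj :
    Function.Injective (Monad.comparison (freeAdj G)).obj := by
  intro S S' h
  have h1 : (forgetTM G).obj S = (forgetTM G).obj S' := congrArg Monad.Algebra.A h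
  have h2 : HEq ((Monad.comparison (freeAdj G)).obj S).a
      ((Monad.comparison (freeAdj G)).obj S').a := by rw [h]
  have hfS : ∀ (X Y : FinGSet G) (f : X.carrier →[G] Y.carrier) (x : S.obj X),
      S.nm f x = ((Monad.comparison (freeAdj G)).obj S).a.app Y
        (FT.mk S.toSemiMackey (.nm f (.of x))) := fun X Y f x => rfl
  have hfS' : ∀ (X Y : FinGSet G) (f : X.carrier →[G] Y.carrier) (x : S'.obj X),
      S'.nm f x = ((Monad.comparison (freeAdj G)).obj S').a.app Y
        (FT.mk S'.toSemiMackey (.nm f (.of x))) := fun X Y f x => rfl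
  obtain ⟨⟨KS, nmS, p1, p2, p3, p4⟩, hnS⟩ := S
  obtain ⟨⟨KS', nmS', q1, q2, q3, q4⟩, hnS'⟩ := S'
  have hK : KS = KS' := congrArg Mackey.toSemiMackey h1
  subst hK
  have hm := eq_of_heq h2
  have hnm : @nmS = @nmS' := by
    funext X Y f x
    have e1 := hfS X Y f x
    have e2 := hfS' X Y f x
    rw [hm] at e1
    exact e1.trans e2.symm
  subst hnm
  rfl

instance comparison_full : (Monad.comparison (freeAdj G)).Full where
  map_surjective {S S'} ψ := by
    refine ⟨⟨ψ.f, ?_⟩, ?_⟩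
    · intro X Y f x
      have h1 := congrArg
        (fun χ : ((freeAdj G).toMonad.obj ((forgetTM G).obj S) ⟶ (forgetTM G).obj S') =>
          χ.app Y (FT.mk S.toSemiMackey (.nm f (.of x)))) ψ.h
      exact h1.symm
    · rfl

instance comparison_essSurj : (Monad.comparison (freeAdj G)).EssSurj where
  mem_essImage A := by
    obtain ⟨S, hS⟩ := comparison_obj_surj A
    exact ⟨S, ⟨eqToIso hS⟩⟩

instance comparison_isEquivalence : (Monad.comparison (freeAdj G)).IsEquivalence where
  faithful := inferInstance
  full := inferInstance
  essSurj := inferInstance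

end Comparison


open CategoryTheory

/-- **Statement 19.** The forgetful functor `Tamb(G) → Mack(G)` is monadic: for the free
Tambara functor adjunction `T ⊣ forget`, the Eilenberg–Moore comparison functor
`Tamb(G) → Mack(G)[𝕋]` is an isomorphism of categories (an equivalence which is
bijective on objects).  Moreover, the norm maps of the Tambara functor corresponding to
a `𝕋`-algebra `(R, m : 𝕋(R) → R)` are given by `n_f = m(Y) ∘ n_f^{𝕋(R)} ∘ θ_R(X)` where
`θ` is the unit of the monad; equivalently, for every Tambara functor `S`, regarded as
the algebra `(forget S, forget(ε_S))`, the norms of `S` satisfy this formula. -/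
theorem statement19 (G : Type) [Group G] [Finite G] :
    ∃ (T : Mackey G ⥤ Tambara G) (adj : T ⊣ forgetTM G),
      (Monad.comparison adj).IsEquivalence ∧
      Function.Bijective (Monad.comparison adj).obj ∧
      (∀ (S : Tambara G) {X Y : FinGSet G} (f : X.carrier →[G] Y.carrier) (x : S.obj X),
        S.nm f x =
          SMackHom.app ((forgetTM G).map (adj.counit.app S)) Y
            ((T.obj ((forgetTM G).obj S)).nm f
              (SMackHom.app (adj.unit.app ((forgetTM G).obj S)) X x))) := by
  refine ⟨freeFunctor G, freeAdj G, comparison_isEquivalence, 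
    ⟨comparison_obj_inj, comparison_obj_surj⟩, ?_⟩
  intro S X Y f x
  exact norm_formula S f x

end Tamb
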